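/- Let n, k be natural numbers with n ≥ 13k - 15 and k ≥ 1. In any 2-colouring of the edges of K_n there is a monochromatic k-connected subgraph on at least n - 2k + 2 vertices. -/

import Mathlib

def IsKConnected {V : Type*} (k : ℕ) (G : SimpleGraph V) : Prop :=
  k < Nat.card V ∧ ∀ S : Set V, S.ncard < k → (G.induce Sᶜ).Connected

def colorGraph (n r : ℕ) (f : Sym2 (Fin n) → Fin r) (i : Fin r) :
    SimpleGraph (Fin n) where
  Adj a b := a ≠ b ∧ f s(a, b) = i
  symm := ⟨fun a b h => ⟨h.1.symm, by rw [Sym2.eq_swap]; exact h.2⟩⟩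
  loopless := ⟨fun a h => h.1 rfl⟩

namespace BGaux

open SimpleGraph Set Classical

variable {n k : ℕ}

def NB (f : Sym2 (Fin n) → Fin 2) (c : Fin 2) (a : Fin n) : Set (Fin n) :=
  {x | (colorGraph n 2 f c).Adj a x}

def Good (k : ℕ) (f : Sym2 (Fin n) → Fin 2) (c : Fin 2) (A : Set (Fin n)) : Prop :=
  k < A.ncard ∧ ∀ D : Set (Fin n), D ⊆ A → D.ncard < k →
    ((colorGraph n 2 f c).induce (A \ D)).Connected

def Main (n k : ℕ) (f : Sym2 (Fin n) → Fin 2) : Prop :=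
  ∃ (i : Fin 2) (A : Set (Fin n)), n - 2*k + 2 ≤ A.ncard ∧ Good k f i A

lemma adj_other {f : Sym2 (Fin n) → Fin 2} {c c' : Fin 2} (hcc : c ≠ c') {a b : Fin n}
    (hab : a ≠ b) (h : ¬ (colorGraph n 2 f c).Adj a b) : (colorGraph n 2 f c').Adj a b := by
  refine ⟨hab, ?_⟩
  have hx : f s(a,b) ≠ c := fun hh => h ⟨hab, hh⟩
  have h1 : (f s(a,b)).val < 2 := (f s(a,b)).isLt
  have h2 : c.val < 2 := c.isLt
  have h3 : c'.val < 2 := c'.isLt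
  have h4 : (f s(a,b)).val ≠ c.val := fun hh => hx (Fin.ext hh)
  have h5 : c.val ≠ c'.val := fun hh => hcc (Fin.ext hh)
  exact Fin.ext (by omega)

lemma ncard_le_diff_add {α : Type*} (s t : Set α) (hs : s.Finite) (ht : t.Finite) :
    s.ncard ≤ (s \ t).ncard + t.ncard := by
  have hsub : s ⊆ (s \ t) ∪ t := fun x hx => by
    by_cases h : x ∈ t
    · exact Or.inr h
    · exact Or.inl ⟨hx, h⟩
  calc s.ncard ≤ ((s \ t) ∪ t).ncard := Set.ncard_le_ncard hsub (hs.diff.union ht)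
  _ ≤ (s \ t).ncard + t.ncard := Set.ncard_union_le _ _

lemma nonempty_of_ncard_lt {α : Type*} (s t : Set α) (hs : s.Finite) (ht : t.Finite)
    (h : t.ncard < s.ncard) : (s \ t).Nonempty := by
  rw [← Set.ncard_pos ((hs.diff))]
  have := ncard_le_diff_add s t hs ht
  omega

lemma conn {V : Type*} (H : SimpleGraph V) (C P : Set V) (hPC : P ⊆ C) (hP : P.Nonempty)
    (h1 : ∀ p ∈ P, ∀ q ∈ P, ∃ r ∈ C, H.Adj p r ∧ H.Adj q r)
    (h2 : ∀ x ∈ C, ∃ p ∈ P, x = p ∨ H.Adj x p) :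
    (H.induce C).Connected := by
  obtain ⟨p₀, hp₀⟩ := hP
  rw [SimpleGraph.connected_iff]
  refine ⟨?_, ⟨⟨p₀, hPC hp₀⟩⟩⟩
  have hpp : ∀ (p q : V) (hp : p ∈ P) (hq : q ∈ P),
      (H.induce C).Reachable ⟨p, hPC hp⟩ ⟨q, hPC hq⟩ := by
    intro p q hp hq
    obtain ⟨r, hr, hpr, hqr⟩ := h1 p hp q hq
    have e1 : (H.induce C).Adj ⟨p, hPC hp⟩ ⟨r, hr⟩ := hpr
    have e2 : (H.induce C).Adj ⟨q, hPC hq⟩ ⟨r, hr⟩ := hqr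
    exact e1.reachable.trans e2.reachable.symm
  intro ⟨x, hx⟩ ⟨y, hy⟩
  obtain ⟨p, hp, hxp⟩ := h2 x hx
  obtain ⟨q, hq, hyq⟩ := h2 y hy
  have rx : (H.induce C).Reachable ⟨x, hx⟩ ⟨p, hPC hp⟩ := by
    rcases hxp with rfl | hadj
    · exact Reachable.refl _
    · exact (SimpleGraph.Adj.reachable (by exact hadj : (H.induce C).Adj ⟨x, hx⟩ ⟨p, hPC hp⟩))
  have ry : (H.induce C).Reachable ⟨y, hy⟩ ⟨q, hPC hq⟩ := by
    rcases hyq with rfl | hadj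
    · exact Reachable.refl _
    · exact (SimpleGraph.Adj.reachable (by exact hadj : (H.induce C).Adj ⟨y, hy⟩ ⟨q, hPC hq⟩))
  exact (rx.trans (hpp p q hp hq)).trans ry.symm

lemma conn_extend {V : Type*} (H : SimpleGraph V) (C C' : Set V) (hCC' : C ⊆ C')
    (hconn : (H.induce C).Connected)
    (h : ∀ x ∈ C', x ∉ C → ∃ y ∈ C, H.Adj x y) : (H.induce C').Connected := by
  have hCne : C.Nonempty := by
    obtain ⟨⟨c0, hc0⟩⟩ := hconn.nonempty
    exact ⟨c0, hc0⟩
  rw [SimpleGraph.connected_iff]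
  obtain ⟨c0, hc0⟩ := hCne
  refine ⟨?_, ⟨⟨c0, hCC' hc0⟩⟩⟩
  let φ : H.induce C →g H.induce C' := ⟨fun x => ⟨x.1, hCC' x.2⟩, fun {a b} hab => hab⟩
  have key : ∀ x : ↥C', ∃ y : ↥C, (H.induce C').Reachable x ⟨y.1, hCC' y.2⟩ := by
    intro ⟨x, hx⟩
    by_cases hxC : x ∈ C
    · exact ⟨⟨x, hxC⟩, Reachable.refl _⟩
    · obtain ⟨y, hy, hadj⟩ := h x hx hxC
      exact ⟨⟨y, hy⟩, SimpleGraph.Adj.reachable (by exact hadj)⟩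
  intro u v
  obtain ⟨yu, hu⟩ := key u
  obtain ⟨yv, hv⟩ := key v
  have := (hconn.preconnected yu yv).map φ
  exact (hu.trans this).trans hv.symm

lemma disconn {V : Type*} (H : SimpleGraph V) (W : Set V) (hne : W.Nonempty)
    (h : ¬ (H.induce W).Connected) :
    ∃ X Y : Set V, X.Nonempty ∧ Y.Nonempty ∧ X ∪ Y = W ∧ Disjoint X Y ∧
      ∀ x ∈ X, ∀ y ∈ Y, ¬ H.Adj x y := by
  rw [SimpleGraph.connected_iff] at h
  push_neg at h
  obtain ⟨w0, hw0⟩ := hne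
  have hpre : ¬ ∀ u v : ↥W, (H.induce W).Reachable u v := fun hp => (h hp).false ⟨w0, hw0⟩
  push_neg at hpre
  obtain ⟨u, v, huv⟩ := hpre
  refine ⟨Subtype.val '' {x | (H.induce W).Reachable u x},
    W \ Subtype.val '' {x | (H.induce W).Reachable u x}, ⟨u.1, u, SimpleGraph.Reachable.refl u, rfl⟩,
    ⟨v.1, v.2, ?_⟩, ?_, disjoint_sdiff_right, ?_⟩
  · rintro ⟨x, hx, hxv⟩
    exact huv (by rwa [Subtype.ext hxv] at hx)
  · apply Set.union_diff_cancel
    rintro _ ⟨x, hx, rfl⟩; exact x.2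
  · rintro _ ⟨x, hx, rfl⟩ y ⟨hyW, hyn⟩ hadj
    exact hyn ⟨⟨y, hyW⟩, hx.trans (SimpleGraph.Adj.reachable (by exact hadj)), rfl⟩

lemma bip (hk : 1 ≤ k) (f : Sym2 (Fin n) → Fin 2) (c : Fin 2) (A B : Set (Fin n))
    (hd : Disjoint A B) (d : ℕ)
    (h1 : ∀ a ∈ A, (B \ NB f c a).ncard ≤ d)
    (h2 : ∀ b ∈ B, k ≤ (A ∩ NB f c b).ncard)
    (h3 : k ≤ A.ncard) (h4 : 2*d + k ≤ B.ncard) : Good k f c (A ∪ B) := by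
  have hAB : (A ∪ B).ncard = A.ncard + B.ncard :=
    Set.ncard_union_eq hd (toFinite _) (toFinite _)
  constructor
  · omega
  · intro D hD hDk
    have hPne : ((A \ D)).Nonempty :=
      nonempty_of_ncard_lt A D (toFinite _) (toFinite _) (by omega)
    refine conn _ ((A ∪ B) \ D) (A \ D) (fun x hx => ⟨Or.inl hx.1, hx.2⟩) hPne ?_ ?_
    · intro p hp q hq
      have hE : (B \ (D ∪ (B \ NB f c p) ∪ (B \ NB f c q))).Nonempty := by
        apply nonempty_of_ncard_lt _ _ (toFinite _) (toFinite _)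
        have e1 := Set.ncard_union_le (D ∪ (B \ NB f c p)) (B \ NB f c q)
        have e2 := Set.ncard_union_le D (B \ NB f c p)
        have e3 := h1 p hp.1
        have e4 := h1 q hq.1
        omega
      obtain ⟨r, hrB, hr⟩ := hE
      simp only [Set.mem_union, not_or] at hr
      refine ⟨r, ⟨Or.inr hrB, hr.1.1⟩, ?_, ?_⟩
      · by_contra hc
        exact hr.1.2 ⟨hrB, hc⟩
      · by_contra hc
        exact hr.2 ⟨hrB, hc⟩
    · intro x hx
      rcases hx.1 with hxA | hxB
      · exact ⟨x, ⟨hxA, hx.2⟩, Or.inl rfl⟩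
      · have hne : ((A ∩ NB f c x) \ D).Nonempty :=
          nonempty_of_ncard_lt _ _ (toFinite _) (toFinite _) (lt_of_lt_of_le hDk (h2 x hxB))
        obtain ⟨p, hp⟩ := hne
        exact ⟨p, ⟨hp.1.1, hp.2⟩, Or.inr ((hp.1.2 : (colorGraph n 2 f c).Adj x p))⟩

set_option maxHeartbeats 800000 in
lemma badbound (hk : 1 ≤ k) (f : Sym2 (Fin n) → Fin 2) (c : Fin 2) (A B : Set (Fin n))
    (hA : 2*k-1 ≤ A.ncard)
    (h1 : ∀ a ∈ A, (B \ NB f c a).ncard ≤ k-1) :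
    {z | z ∈ B ∧ (A ∩ NB f c z).ncard ≤ k-1}.ncard ≤ 2*k-2 := by
  classical
  set G := colorGraph n 2 f c with hG
  set bad := {z | z ∈ B ∧ (A ∩ NB f c z).ncard ≤ k-1} with hbad
  by_contra hcon
  push_neg at hcon
  have hAf : A.Finite := toFinite _
  have hbf : bad.Finite := toFinite _
  set AF := hAf.toFinset with hAF
  set badF := hbf.toFinset with hbadF
  set N := (AF ×ˢ badF).filter (fun p => ¬ G.Adj p.1 p.2) with hN
  -- upper bound
  have hup : N.card ≤ AF.card * (k-1) := by
    rw [Finset.card_eq_sum_card_fiberwise (f := Prod.fst) (t := AF)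
      (fun p hp => (Finset.mem_product.mp (Finset.mem_filter.mp hp).1).1)]
    calc ∑ a ∈ AF, (N.filter (fun p => p.1 = a)).card
        ≤ ∑ a ∈ AF, (k-1) := by
          apply Finset.sum_le_sum
          intro a ha
          have hinj : ((N.filter (fun p => p.1 = a)).image Prod.snd).card
              = (N.filter (fun p => p.1 = a)).card := by
            apply Finset.card_image_of_injOn
            intro p hp q hq hpq
            have hp1 := (Finset.mem_filter.mp hp).2
            have hq1 := (Finset.mem_filter.mp hq).2
            exact Prod.ext (hp1.trans hq1.symm) hpq
          rw [← hinj]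
          have hsub : (N.filter (fun p => p.1 = a)).image Prod.snd
              ⊆ (toFinite (B \ NB f c a)).toFinset := by
            intro z hz
            obtain ⟨p, hp, rfl⟩ := Finset.mem_image.mp hz
            have h2 := Finset.mem_filter.mp hp
            have h3 := Finset.mem_filter.mp h2.1
            have hzB : p.2 ∈ B := (hbf.mem_toFinset.mp (Finset.mem_product.mp h3.1).2).1
            rw [Set.Finite.mem_toFinset]
            refine ⟨hzB, fun hnb => h3.2 ?_⟩
            rw [h2.2]
            exact hnb
          calc ((N.filter (fun p => p.1 = a)).image Prod.snd).card
              ≤ (toFinite (B \ NB f c a)).toFinset.card := Finset.card_le_card hsub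
            _ = (B \ NB f c a).ncard := (Set.ncard_eq_toFinset_card _ _).symm
            _ ≤ k-1 := h1 a (hAf.mem_toFinset.mp ha)
      _ = AF.card * (k-1) := by rw [Finset.sum_const, smul_eq_mul]
  -- lower bound
  have hlow : badF.card * (A.ncard - (k-1)) ≤ N.card := by
    rw [Finset.card_eq_sum_card_fiberwise (f := Prod.snd) (t := badF)
      (fun p hp => (Finset.mem_product.mp (Finset.mem_filter.mp hp).1).2)]
    have hbound : ∀ z ∈ badF, A.ncard - (k-1) ≤ (N.filter (fun p => p.2 = z)).card := by
      intro z hz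
      have hzbad : z ∈ bad := hbf.mem_toFinset.mp hz
      have hdiff : A.ncard - (k-1) ≤ (A \ NB f c z).ncard := by
        have h5 : A \ (A ∩ NB f c z) = A \ NB f c z := by
          ext x; simp only [Set.mem_diff, Set.mem_inter_iff]; tauto
        have := ncard_le_diff_add A (A ∩ NB f c z) (toFinite _) (toFinite _)
        rw [h5] at this
        have h6 := hzbad.2
        omega
      have hsub : ((toFinite (A \ NB f c z)).toFinset).image (fun a => (a, z))
          ⊆ N.filter (fun p => p.2 = z) := by
        intro p hp
        obtain ⟨a, ha, rfl⟩ := Finset.mem_image.mp hp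
        rw [Set.Finite.mem_toFinset] at ha
        refine Finset.mem_filter.mpr ⟨Finset.mem_filter.mpr ⟨Finset.mem_product.mpr
          ⟨hAf.mem_toFinset.mpr ha.1, hz⟩, fun hadj => ha.2 hadj.symm⟩, rfl⟩
      calc A.ncard - (k-1) ≤ (A \ NB f c z).ncard := hdiff
        _ = ((toFinite (A \ NB f c z)).toFinset).card := Set.ncard_eq_toFinset_card _ _
        _ = (((toFinite (A \ NB f c z)).toFinset).image (fun a => (a, z))).card :=
            (Finset.card_image_of_injective _ (fun x y hxy => (Prod.ext_iff.mp hxy).1)).symm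
        _ ≤ (N.filter (fun p => p.2 = z)).card := Finset.card_le_card hsub
    calc badF.card * (A.ncard - (k-1)) = ∑ _z ∈ badF, (A.ncard - (k-1)) := by
          rw [Finset.sum_const, smul_eq_mul]
      _ ≤ ∑ z ∈ badF, (N.filter (fun p => p.2 = z)).card := Finset.sum_le_sum hbound
  -- combine
  have hAcard : AF.card = A.ncard := (Set.ncard_eq_toFinset_card _ _).symm
  have hbcard : badF.card = bad.ncard := (Set.ncard_eq_toFinset_card _ _).symm
  rw [hAcard] at hup
  rw [hbcard] at hlow
  -- arithmetic contradiction
  set a := A.ncard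
  set b := bad.ncard
  have h9 : b * (a - (k-1)) ≤ a * (k-1) := le_trans hlow hup
  have h10 : (2*k-1) * (a - (k-1)) ≤ b * (a - (k-1)) :=
    Nat.mul_le_mul_right _ (by omega)
  have h11 : (2*k-1) * (a - (k-1)) ≤ a * (k-1) := le_trans h10 h9
  have hak : (k-1) ≤ a := by omega
  have h2k : 1 ≤ 2*k := by omega
  zify [hak, h2k, hk] at h11
  have ha' : (2*(k:ℤ)-1) ≤ (a:ℤ) := by
    have : 2*k-1 ≤ a := by omega
    zify at this
    omega
  have hk' : (1:ℤ) ≤ (k:ℤ) := by exact_mod_cast hk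
  have hk0 : (0:ℤ) ≤ (k:ℤ) := by omega
  nlinarith [h11, ha', hk', mul_le_mul_of_nonneg_right ha' hk0]


lemma addvx (hk : 1 ≤ k) (f : Sym2 (Fin n) → Fin 2) (c : Fin 2) (Z : Set (Fin n))
    (hZ : Good k f c Z) (v : Fin n) (hv : v ∉ Z) (hnb : k ≤ (NB f c v ∩ Z).ncard) :
    Good k f c (Z ∪ {v}) := by
  obtain ⟨hZ1, hZ2⟩ := hZ
  have hcard : (Z ∪ {v}).ncard = Z.ncard + 1 := by
    rw [Set.union_singleton, Set.ncard_insert_of_notMem hv (toFinite _)]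
  constructor
  · omega
  · intro D hD hDk
    by_cases hvD : v ∈ D
    · have heq : (Z ∪ {v}) \ D = Z \ (D ∩ Z) := by
        ext x
        simp only [Set.mem_diff, Set.mem_union, Set.mem_singleton_iff, Set.mem_inter_iff]
        constructor
        · rintro ⟨hx1 | rfl, hx2⟩
          · exact ⟨hx1, fun h => hx2 h.1⟩
          · exact absurd hvD hx2
        · rintro ⟨hx1, hx2⟩
          exact ⟨Or.inl hx1, fun hD' => hx2 ⟨hD', hx1⟩⟩
      rw [heq]
      exact hZ2 _ Set.inter_subset_right
        (lt_of_le_of_lt (Set.ncard_le_ncard Set.inter_subset_left (toFinite _)) hDk)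
    · have hDZ : D ⊆ Z := by
        intro x hx
        rcases hD hx with h | h
        · exact h
        · rw [Set.mem_singleton_iff] at h
          exact absurd (h ▸ hx) hvD
      have hCC' : Z \ D ⊆ (Z ∪ {v}) \ D := fun x hx => ⟨Or.inl hx.1, hx.2⟩
      apply conn_extend _ (Z \ D) _ hCC' (hZ2 D hDZ hDk)
      intro x hx hxC
      have hxv : x = v := by
        rcases hx.1 with h | h
        · exact absurd ⟨h, hx.2⟩ hxC
        · exact h
      have hne : ((NB f c v ∩ Z) \ D).Nonempty :=
        nonempty_of_ncard_lt _ _ (toFinite _) (toFinite _) (lt_of_lt_of_le hDk hnb)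
      obtain ⟨y, hy⟩ := hne
      refine ⟨y, ⟨hy.1.2, hy.2⟩, ?_⟩
      rw [hxv]
      exact hy.1.1

lemma strong (hk : 1 ≤ k) (hn2 : 2 ≤ n) (hn : 13*k - 15 ≤ n)
    (f : Sym2 (Fin n) → Fin 2) (c c' : Fin 2) (hcc : c ≠ c') (Z₀ : Set (Fin n))
    (h₀ : Good k f c Z₀) (hZ₀ : 5*k-4 ≤ Z₀.ncard) : Main n k f := by
  classical
  set S : Finset (Finset (Fin n)) := Finset.univ.filter
    (fun F : Finset (Fin n) => Z₀ ⊆ (F : Set (Fin n)) ∧ Good k f c (F : Set (Fin n))) with hS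
  have hSne : S.Nonempty := by
    refine ⟨(toFinite Z₀).toFinset, ?_⟩
    rw [hS, Finset.mem_filter]
    refine ⟨Finset.mem_univ _, ?_, ?_⟩
    · rw [Set.Finite.coe_toFinset]
    · rw [Set.Finite.coe_toFinset]; exact h₀
  obtain ⟨F, hF, hFmax⟩ := S.exists_max_image Finset.card hSne
  rw [hS, Finset.mem_filter] at hF
  obtain ⟨-, hFZ₀, hFgood⟩ := hF
  set Z := (↑F : Set (Fin n)) with hZdef
  have hLlow : 5*k-4 ≤ Z.ncard := le_trans hZ₀ (Set.ncard_le_ncard hFZ₀ (toFinite _))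
  by_cases hbig : n - 2*k + 2 ≤ Z.ncard
  · exact ⟨c, Z, hbig, hFgood⟩
  · push_neg at hbig
    -- closure property
    have hclose : ∀ v, v ∉ Z → (NB f c v ∩ Z).ncard ≤ k-1 := by
      intro v hv
      by_contra hvk
      have hvk' : k ≤ (NB f c v ∩ Z).ncard := by omega
      have hgood' : Good k f c (Z ∪ {v}) := addvx hk f c Z hFgood v hv hvk'
      have hmem : insert v F ∈ S := by
        rw [hS, Finset.mem_filter]
        refine ⟨Finset.mem_univ _, ?_, ?_⟩
        · push_cast
          exact le_trans hFZ₀ (by intro x hx; exact Set.mem_insert_of_mem _ hx)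
        · have : ((insert v F : Finset (Fin n)) : Set (Fin n)) = Z ∪ {v} := by
            push_cast
            rw [Set.union_singleton]
          rw [this]
          exact hgood'
      have hcard := hFmax _ hmem
      rw [Finset.card_insert_of_notMem (fun hvF => hv (by exact hvF))] at hcard
      omega
    -- cardinalities
    have hcompl : Z.ncard + Zᶜ.ncard = n := by
      have := Set.ncard_add_ncard_compl Z
      rwa [Nat.card_eq_fintype_card, Fintype.card_fin] at this
    have hrho : 2*k-1 ≤ Zᶜ.ncard := by omega
    -- misses in colour c'
    have hmiss : ∀ r ∈ Zᶜ, (Z \ NB f c' r).ncard ≤ k-1 := by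
      intro r hr
      have hsub : Z \ NB f c' r ⊆ NB f c r ∩ Z := by
        intro x hx
        have hrx : r ≠ x := fun h => hr (h ▸ hx.1)
        have : ¬ (colorGraph n 2 f c').Adj r x := fun h => hx.2 h
        exact ⟨adj_other (fun h => hcc (h.symm)) hrx this, hx.1⟩
      exact le_trans (Set.ncard_le_ncard hsub (toFinite _)) (hclose r hr)
    -- bad set
    set bad := {z | z ∈ Z ∧ (Zᶜ ∩ NB f c' z).ncard ≤ k-1} with hbaddef
    have hbadcard : bad.ncard ≤ 2*k-2 := badbound hk f c' Zᶜ Z hrho hmiss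
    set B' := Z \ bad with hB'def
    have hB'card : Z.ncard ≤ B'.ncard + bad.ncard :=
      ncard_le_diff_add Z bad (toFinite _) (toFinite _)
    have hgoodfin : Good k f c' (Zᶜ ∪ B') := by
      apply bip hk f c' Zᶜ B' (Set.disjoint_left.mpr (fun x hx hxB => hx hxB.1)) (k-1)
      · intro r hr
        exact le_trans (Set.ncard_le_ncard
          (Set.diff_subset_diff_left Set.diff_subset) (toFinite _)) (hmiss r hr)
      · intro b hb
        have : b ∉ bad := hb.2
        rw [hbaddef, Set.mem_setOf_eq] at this
        push_neg at this
        have := this hb.1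
        omega
      · omega
      · omega
    refine ⟨c', Zᶜ ∪ B', ?_, hgoodfin⟩
    have hdisj2 : Disjoint Zᶜ B' := Set.disjoint_left.mpr (fun x hx hxB => hx hxB.1)
    rw [Set.ncard_union_eq hdisj2 (toFinite _) (toFinite _)]
    omega

lemma endgame (hk : 1 ≤ k) (hn2 : 2 ≤ n) (hn : 13*k - 15 ≤ n)
    (f : Sym2 (Fin n) → Fin 2) (A : Set (Fin n))
    (hA1 : 2*k-1 ≤ A.ncard) (hA2 : A.ncard ≤ 3*k-3)
    (hI : ∀ a ∈ A, (Aᶜ \ NB f 1 a).ncard ≤ k-1) : Main n k f := by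
  have hcompl : A.ncard + Aᶜ.ncard = n := by
    have := Set.ncard_add_ncard_compl A
    rwa [Nat.card_eq_fintype_card, Fintype.card_fin] at this
  set bad := {z | z ∈ Aᶜ ∧ (A ∩ NB f 1 z).ncard ≤ k-1} with hbaddef
  have hbadcard : bad.ncard ≤ 2*k-2 := badbound hk f 1 A Aᶜ hA1 hI
  set B' := Aᶜ \ bad with hB'def
  have hB'card : Aᶜ.ncard ≤ B'.ncard + bad.ncard :=
    ncard_le_diff_add Aᶜ bad (toFinite _) (toFinite _)
  have hgoodfin : Good k f 1 (A ∪ B') := by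
    apply bip hk f 1 A B' (Set.disjoint_left.mpr (fun x hx hxB => hxB.1 hx)) (k-1)
    · intro a ha
      exact le_trans (Set.ncard_le_ncard
        (Set.diff_subset_diff_left Set.diff_subset) (toFinite _)) (hI a ha)
    · intro b hb
      have hnb : b ∉ bad := hb.2
      rw [hbaddef, Set.mem_setOf_eq] at hnb
      push_neg at hnb
      have := hnb hb.1
      omega
    · omega
    · omega
  refine ⟨1, A ∪ B', ?_, hgoodfin⟩
  have hdisj2 : Disjoint A B' := Set.disjoint_left.mpr (fun x hx hxB => hxB.1 hx)
  rw [Set.ncard_union_eq hdisj2 (toFinite _) (toFinite _)]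
  omega

lemma peel (hk : 1 ≤ k) (hn2 : 2 ≤ n) (hn : 13*k - 15 ≤ n)
    (f : Sym2 (Fin n) → Fin 2) :
    ∀ N : ℕ, ∀ U : Set (Fin n), U.ncard ≤ N → Uᶜ.ncard ≤ 2*k-2 →
      (∀ a ∈ Uᶜ, (U \ NB f 1 a).ncard ≤ k-1) → Main n k f := by
  intro N
  induction N with
  | zero =>
    intro U hU hUc hI
    exfalso
    have h1 : U.ncard = 0 := by omega
    have h2 : U = ∅ := (Set.ncard_eq_zero (toFinite _)).mp h1
    have h3 : Uᶜ.ncard = n := by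
      rw [h2, Set.compl_empty, Set.ncard_univ, Nat.card_eq_fintype_card, Fintype.card_fin]
    omega
  | succ N ih =>
    intro U hU hUc hI
    have hUcard : U.ncard + Uᶜ.ncard = n := by
      have := Set.ncard_add_ncard_compl U
      rwa [Nat.card_eq_fintype_card, Fintype.card_fin] at this
    by_cases hg : Good k f 0 U
    · exact ⟨0, U, by omega, hg⟩
    · have hkU : k < U.ncard := by omega
      rw [Good] at hg
      push_neg at hg
      obtain ⟨D, hDU, hDk, hdisc⟩ := hg hkU
      have hWne : (U \ D).Nonempty :=
        nonempty_of_ncard_lt _ _ (toFinite _) (toFinite _) (by omega)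
      obtain ⟨X, Y, hXne, hYne, hXY, hdisj, hnoadj⟩ := disconn _ _ hWne hdisc
      have hXYcard : X.ncard + Y.ncard + D.ncard = U.ncard := by
        have h5 : (X ∪ Y).ncard = X.ncard + Y.ncard :=
          Set.ncard_union_eq hdisj (toFinite _) (toFinite _)
        have h6 : (U \ D).ncard = U.ncard - D.ncard := Set.ncard_diff hDU
        have h7 : D.ncard ≤ U.ncard := Set.ncard_le_ncard hDU (toFinite _)
        rw [hXY] at h5
        omega
      -- continuation for the small-side case
      have cont : ∀ X' Y' : Set (Fin n), X'.Nonempty → X' ∪ Y' = U \ D →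
          Disjoint X' Y' → (∀ x ∈ X', ∀ y ∈ Y', ¬ (colorGraph n 2 f 0).Adj x y) →
          X'.ncard < k → Main n k f := by
        intro X' Y' hXne' hXY' hdisj' hnoadj' hXk
        set U' := U \ X' with hU'def
        have hXU : X' ⊆ U := by
          intro x hx
          have : x ∈ U \ D := hXY' ▸ Or.inl hx
          exact this.1
        have hcomplU' : U'ᶜ = Uᶜ ∪ X' := by
          rw [hU'def]
          ext x
          simp only [Set.mem_compl_iff, Set.mem_diff, Set.mem_union, not_and, not_not]
          constructor
          · intro h
            by_cases hxU : x ∈ U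
            · exact Or.inr (h hxU)
            · exact Or.inl hxU
          · rintro (h | h)
            · intro hxU; exact absurd hxU h
            · intro _; exact h
        have hU'c : U'ᶜ.ncard = Uᶜ.ncard + X'.ncard := by
          have hdd : Disjoint Uᶜ X' := by
            rw [Set.disjoint_left]
            intro x hx hxX
            exact hx (hXU hxX)
          rw [hcomplU', Set.ncard_union_eq hdd (toFinite _) (toFinite _)]
        have hInv' : ∀ a ∈ U'ᶜ, (U' \ NB f 1 a).ncard ≤ k-1 := by
          intro a ha
          rw [hcomplU'] at ha
          rcases ha with ha | ha
          · exact le_trans (Set.ncard_le_ncard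
              (Set.diff_subset_diff_left Set.diff_subset) (toFinite _)) (hI a ha)
          · have hsubD : U' \ NB f 1 a ⊆ D := by
              intro x hx
              by_contra hxD
              have hxU : x ∈ U \ D := ⟨hx.1.1, hxD⟩
              rw [← hXY'] at hxU
              rcases hxU with hxX | hxY
              · exact hx.1.2 hxX
              · have hax : a ≠ x := fun h =>
                  (Set.disjoint_left.mp hdisj' ha) (h ▸ hxY)
                have hblue : (colorGraph n 2 f 1).Adj a x :=
                  adj_other (by decide) hax (hnoadj' a ha x hxY)
                exact hx.2 hblue
            exact le_trans (Set.ncard_le_ncard hsubD (toFinite _)) (by omega)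
        have hX1 : 1 ≤ X'.ncard := (Set.ncard_pos (toFinite _)).mpr hXne'
        have hU'card : U'.ncard = U.ncard - X'.ncard := Set.ncard_diff hXU
        by_cases hrec : U'ᶜ.ncard ≤ 2*k-2
        · exact ih U' (by omega) hrec hInv'
        · apply endgame hk hn2 hn f U'ᶜ (by omega) (by omega)
          intro a ha
          rw [compl_compl]
          exact hInv' a ha
      by_cases hbig : k ≤ X.ncard ∧ k ≤ Y.ncard
      · -- big biclique: blue Good + strong
        have hXblue : ∀ x ∈ X, ∀ y ∈ Y, (colorGraph n 2 f 1).Adj x y := by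
          intro x hx y hy
          have hxy : x ≠ y := fun h => (Set.disjoint_left.mp hdisj hx) (h ▸ hy)
          exact adj_other (by decide) hxy (hnoadj x hx y hy)
        have hgood : Good k f 1 (X ∪ Y) := by
          apply bip hk f 1 X Y hdisj 0
          · intro a ha
            have : Y \ NB f 1 a = ∅ := by
              ext y
              simp only [Set.mem_diff, Set.mem_empty_iff_false, iff_false, not_and, not_not]
              intro hy
              exact hXblue a ha y hy
            rw [this, Set.ncard_empty]
          · intro b hb
            have hsub : X ⊆ X ∩ NB f 1 b := by
              intro x hx
              exact ⟨hx, ((hXblue x hx b hb).symm : (colorGraph n 2 f 1).Adj b x)⟩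
            exact le_trans hbig.1 (Set.ncard_le_ncard hsub (toFinite _))
          · exact hbig.1
          · omega
        apply strong hk hn2 hn f 1 0 (by decide) (X ∪ Y) hgood
        have h8 : (X ∪ Y).ncard = X.ncard + Y.ncard :=
          Set.ncard_union_eq hdisj (toFinite _) (toFinite _)
        omega
      · -- small side
        push_neg at hbig
        by_cases hXsmall : X.ncard < k
        · exact cont X Y hXne hXY hdisj hnoadj hXsmall
        · have hYsmall : Y.ncard < k := by
            have := hbig (by omega)
            omega
          apply cont Y X hYne (by rw [Set.union_comm]; exact hXY) hdisj.symm
            (fun y hy x hx hadj => hnoadj x hx y hy hadj.symm) hYsmall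

lemma good_isk (f : Sym2 (Fin n) → Fin 2) {c : Fin 2} {A : Set (Fin n)}
    (h : Good k f c A) : IsKConnected k ((colorGraph n 2 f c).induce A) := by
  obtain ⟨h1, h2⟩ := h
  constructor
  · rwa [Nat.card_coe_set_eq]
  · intro S hS
    set D := Subtype.val '' S with hDdef
    have hD : D.ncard < k := by
      rw [hDdef, Set.ncard_image_of_injective _ Subtype.val_injective]
      exact hS
    have hsub : D ⊆ A := by
      rintro _ ⟨x, hx, rfl⟩
      exact x.2
    have hc := h2 D hsub hD
    -- build the iso
    let e : ↥(A \ D) ≃ ↥(Sᶜ : Set ↥A) :=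
      { toFun := fun x => ⟨⟨x.1, x.2.1⟩, fun hmem => x.2.2 ⟨⟨x.1, x.2.1⟩, hmem, rfl⟩⟩
        invFun := fun y => ⟨y.1.1, y.1.2, fun hmem => by
          obtain ⟨s, hs, hv⟩ := hmem
          exact y.2 (by rwa [show s = y.1 from Subtype.ext hv] at hs)⟩
        left_inv := fun x => Subtype.ext rfl
        right_inv := fun y => Subtype.ext (Subtype.ext rfl) }
    let φ : (colorGraph n 2 f c).induce (A \ D) ≃g ((colorGraph n 2 f c).induce A).induce Sᶜ :=
      { toEquiv := e
        map_rel_iff' := Iff.rfl }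
    exact hc.map φ.toHom φ.toEquiv.surjective

end BGaux

theorem stmt9 (n k : ℕ) (hk : 1 ≤ k) (hn2 : 2 ≤ n) (hn : 13 * k - 15 ≤ n)
    (f : Sym2 (Fin n) → Fin 2) :
    ∃ (i : Fin 2) (A : Set (Fin n)), n - 2 * k + 2 ≤ A.ncard ∧
      IsKConnected k ((colorGraph n 2 f i).induce A) := by
  have hmain : BGaux.Main n k f := by
    apply BGaux.peel hk hn2 hn f n Set.univ (by simp [Set.ncard_univ, Nat.card_eq_fintype_card])
    · simp
    · simp
  obtain ⟨i, A, hA, hG⟩ := hmain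
  exact ⟨i, A, hA, BGaux.good_isk f hG⟩
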